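/- arXiv:1305.2503 — 4 statements merged into one kernel-verified Lean document; each statement's English description precedes it below -/
import Mathlib

section
/- For positive integers n, k with n > 2k, the odd girth of the Kneser graph K_{n,k} equals 2⌈k/(n−2k)⌉ + 1. -/
open SimpleGraph

/-- The `r`-fold neighborhood: `nbhd G 0 v = {v}`, `nbhd G (r+1) v = ⋃_{w ∈ nbhd G r v} N(w)`. -/
def nbhd {V : Type*} (G : SimpleGraph V) : ℕ → V → Set V
  | 0, v => {v}
  | r+1, v => {y | ∃ w ∈ nbhd G r v, G.Adj w y}

/-- The Kneser graph on `k`-subsets of `[n]`. -/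
def kneser (n k : ℕ) : SimpleGraph {A : Finset (Fin n) // A.card = k} where
  Adj A B := A ≠ B ∧ Disjoint A.1 B.1
  symm := ⟨by rintro A B ⟨h1, h2⟩; exact ⟨h1.symm, h2.symm⟩⟩
  loopless := ⟨by rintro A ⟨h, _⟩; exact h rfl⟩

/-- The odd girth of a graph, as an extended natural number. -/
noncomputable def oddGirth {V : Type*} (G : SimpleGraph V) : ℕ∞ :=
  sInf ((↑) '' {l : ℕ | Odd l ∧ ∃ v : V, ∃ w : G.Walk v v, w.length = l})

/-- The cycle graph on `ZMod m`. -/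
def cyc (m : ℕ) : SimpleGraph (ZMod m) where
  Adj x y := x ≠ y ∧ (y = x + 1 ∨ x = y + 1)
  symm := ⟨by rintro x y ⟨h1, h2⟩; exact ⟨h1.symm, h2.symm⟩⟩
  loopless := ⟨fun x h => h.1 rfl⟩

/-- The `r`-neighborhood complex of `G`, as a set of finite subsets of vertices. -/
def nComplex {V : Type*} (G : SimpleGraph V) (r : ℕ) : Set (Finset V) :=
  {σ | ∃ v : V, ↑σ ⊆ nbhd G r v}

section Aux

/-- Interval as a finset of `Fin n`. -/
def finIco (n a b : ℕ) : Finset (Fin n) :=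
  Finset.univ.filter (fun x => a ≤ x.val ∧ x.val < b)

lemma mem_finIco {n a b : ℕ} {x : Fin n} : x ∈ finIco n a b ↔ a ≤ x.val ∧ x.val < b := by
  simp [finIco]

lemma card_finIco (n a b : ℕ) (hb : b ≤ n) : (finIco n a b).card = b - a := by
  rw [← Nat.card_Ico a b]
  apply Finset.card_bij (fun x _ => x.val)
  · intro x hx; rw [mem_finIco] at hx; simpa using hx
  · intro x _ y _ hxy; exact Fin.val_injective hxy
  · intro m hm
    simp only [Finset.mem_Ico] at hm
    exact ⟨⟨m, lt_of_lt_of_le hm.2 hb⟩, mem_finIco.mpr hm, rfl⟩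

/-- Build a walk from a vertex sequence. -/
lemma walk_of_fn {V : Type*} (G : SimpleGraph V) (f : ℕ → V) :
    ∀ m, (∀ j, j < m → G.Adj (f j) (f (j+1))) → ∃ w : G.Walk (f 0) (f m), w.length = m := by
  intro m
  induction m with
  | zero => exact fun _ => ⟨.nil, rfl⟩
  | succ m ih =>
    intro hadj
    obtain ⟨w, hw⟩ := ih (fun j hj => hadj j (hj.trans (Nat.lt_succ_self m)))
    exact ⟨w.concat (hadj m (Nat.lt_succ_self m)), by simp [hw]⟩

/-- Disjoint nonempty `k`-sets are distinct, hence adjacent in the Kneser graph. -/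
lemma kneser_adj_of_disjoint {n k : ℕ} (hk : 0 < k) {A B : {A : Finset (Fin n) // A.card = k}}
    (hd : Disjoint A.1 B.1) : (kneser n k).Adj A B := by
  refine ⟨fun hEq => ?_, hd⟩
  subst hEq
  rw [disjoint_self] at hd
  have := A.2
  rw [hd] at this
  simp at this
  omega

/-- Lower bound: any odd closed walk in `K_{n,k}` of length `2s+1` satisfies `k ≤ s*(n-2k)`. -/
lemma kneser_lower (n k : ℕ) (h : 2 * k < n) {v : {A : Finset (Fin n) // A.card = k}}
    (w : (kneser n k).Walk v v) (s : ℕ) (hl : w.length = 2 * s + 1) :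
    k ≤ s * (n - 2 * k) := by
  set d := n - 2 * k with hd
  set A : ℕ → Finset (Fin n) := fun i => (w.getVert i).1 with hA
  have hcard : ∀ i, (A i).card = k := fun i => (w.getVert i).2
  have hadj : ∀ i, i < 2 * s + 1 → Disjoint (A i) (A (i+1)) := by
    intro i hi
    exact (w.adj_getVert_succ (by omega)).2
  have key : ∀ i, i ≤ s → k ≤ (A 0 ∩ A (2*i)).card + i * d := by
    intro i
    induction i with
    | zero => intro _; simp [Finset.inter_self, hcard]
    | succ i ih =>
      intro hi
      have ih' := ih (by omega)
      have D1 : Disjoint (A (2*i)) (A (2*i+1)) := hadj _ (by omega)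
      have D2 : Disjoint (A (2*i+1)) (A (2*i+2)) := hadj _ (by omega)
      have hsub : A (2*i) ∪ A (2*i+2) ⊆ (A (2*i+1))ᶜ := by
        intro x hx
        rw [Finset.mem_union] at hx
        rw [Finset.mem_compl]
        rcases hx with hx | hx
        · exact Finset.disjoint_left.mp D1 hx
        · exact fun hc => Finset.disjoint_left.mp D2 hc hx
      have hunion : (A (2*i) ∪ A (2*i+2)).card ≤ n - k := by
        calc (A (2*i) ∪ A (2*i+2)).card ≤ ((A (2*i+1))ᶜ).card := Finset.card_le_card hsub
        _ = n - k := by rw [Finset.card_compl, hcard]; simp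
      have hsdiff : (A (2*i) \ A (2*i+2)).card ≤ d := by
        have h1 := Finset.card_sdiff_add_card (A (2*i)) (A (2*i+2))
        have hc := hcard (2*i+2)
        omega
      have hsub2 : A 0 ∩ A (2*i) ⊆ (A 0 ∩ A (2*i+2)) ∪ (A (2*i) \ A (2*i+2)) := by
        intro x hx
        rw [Finset.mem_inter] at hx
        rw [Finset.mem_union, Finset.mem_inter, Finset.mem_sdiff]
        by_cases hc : x ∈ A (2*i+2)
        · exact Or.inl ⟨hx.1, hc⟩
        · exact Or.inr ⟨hx.2, hc⟩
      have hle : (A 0 ∩ A (2*i)).card ≤ (A 0 ∩ A (2*i+2)).card + d := by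
        calc (A 0 ∩ A (2*i)).card
            ≤ ((A 0 ∩ A (2*i+2)) ∪ (A (2*i) \ A (2*i+2))).card := Finset.card_le_card hsub2
          _ ≤ (A 0 ∩ A (2*i+2)).card + (A (2*i) \ A (2*i+2)).card := Finset.card_union_le _ _
          _ ≤ (A 0 ∩ A (2*i+2)).card + d := by omega
      have hmul : (i+1) * d = i * d + d := by ring
      have h22 : 2*(i+1) = 2*i+2 := by ring
      rw [h22]
      omega
  have hfin := key s le_rfl
  have hDlast : Disjoint (A (2*s)) (A (2*s+1)) := hadj _ (by omega)
  have hlast : A (2*s+1) = A 0 := by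
    have h1 : w.getVert (2*s+1) = v := by rw [← hl]; exact w.getVert_length
    have h2 : w.getVert 0 = v := w.getVert_zero
    simp only [hA, h1, h2]
  have hzero : A 0 ∩ A (2*s) = ∅ := by
    rw [← Finset.disjoint_iff_inter_eq_empty]
    exact (hDlast.mono_right (le_of_eq hlast.symm)).symm
  rw [hzero] at hfin
  simpa using hfin

/-- Upper bound: existence of a closed walk of length `2t+1`. -/
lemma kneser_upper (n k t : ℕ) (hk : 0 < k) (h : 2 * k < n)
    (h1 : k ≤ t * (n - 2*k)) (h2 : t * (n - 2*k) + k ≤ n) :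
    ∃ v, ∃ w : (kneser n k).Walk v v, w.length = 2 * t + 1 := by
  set d := n - 2 * k with hd
  have hd0 : 0 < d := by omega
  have ht1 : 1 ≤ t := by
    by_contra hc
    push_neg at hc
    interval_cases t
    simp at h1
    omega
  have hmono : ∀ i, i ≤ t → i * d ≤ t * d := fun i hi => Nat.mul_le_mul_right d hi
  have hEcard : ∀ i, i ≤ t → (finIco n (i*d) (i*d + k)).card = k := by
    intro i hi
    have := hmono i hi
    rw [card_finIco n _ _ (by omega)]; omega
  have hOcard : ∀ i, i ≤ t - 1 → ((finIco n (i*d) (i*d + d + k))ᶜ).card = k := by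
    intro i hi
    have hit : i * d + d = (i+1) * d := by ring
    have : (i+1) * d ≤ t * d := Nat.mul_le_mul_right d (by omega)
    rw [Finset.card_compl, card_finIco n _ _ (by omega)]
    simp only [Fintype.card_fin]
    omega
  -- vertices
  set E : ℕ → {A : Finset (Fin n) // A.card = k} :=
    fun i => ⟨finIco n ((min i t)*d) ((min i t)*d + k), hEcard _ (min_le_right i t)⟩ with hE
  set O : ℕ → {A : Finset (Fin n) // A.card = k} :=
    fun i => ⟨(finIco n ((min i (t-1))*d) ((min i (t-1))*d + d + k))ᶜ,
      hOcard _ (min_le_right i (t-1))⟩ with hO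
  have hEval : ∀ i, i ≤ t → (E i).1 = finIco n (i*d) (i*d + k) := by
    intro i hi; simp [hE, min_eq_left hi]
  have hOval : ∀ i, i ≤ t - 1 → (O i).1 = (finIco n (i*d) (i*d + d + k))ᶜ := by
    intro i hi; simp [hO, min_eq_left hi]
  set f : ℕ → {A : Finset (Fin n) // A.card = k} :=
    fun j => if Even j then E (j/2) else O (j/2) with hf
  have hadj : ∀ j, j < 2*t → (kneser n k).Adj (f j) (f (j+1)) := by
    intro j hj
    apply kneser_adj_of_disjoint hk
    rcases Nat.even_or_odd j with hev | hodd
    · -- j = 2i : edge E i — O i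
      obtain ⟨i, hi⟩ := hev
      have hji : j = 2*i := by omega
      have hit : i < t := by omega
      have hdiv1 : (2*i)/2 = i := by omega
      have hdiv2 : (2*i+1)/2 = i := by omega
      have hfj : f j = E i := by
        rw [hji, hf]; simp [hdiv1]
      have hfj1 : f (j+1) = O i := by
        rw [hji, hf]; simp [hdiv2, Nat.even_add_one, parity_simps]
      rw [hfj, hfj1]
      rw [Finset.disjoint_left]
      intro x hx hx'
      rw [hEval i hit.le] at hx
      rw [hOval i (by omega), Finset.mem_compl] at hx'
      rw [mem_finIco] at hx
      exact hx' (mem_finIco.mpr (by omega))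
    · -- j = 2i+1 : edge O i — E (i+1)
      obtain ⟨i, hi⟩ := hodd
      have hit : i < t := by omega
      have hdiv1 : (2*i+1)/2 = i := by omega
      have hdiv2 : (2*i+2)/2 = i+1 := by omega
      have hfj : f j = O i := by
        rw [hi, hf]; simp [hdiv1, Nat.even_add_one, parity_simps]
      have hfj1 : f (j+1) = E (i+1) := by
        rw [hi, show 2*i+1+1 = 2*i+2 from rfl, hf]
        simp [hdiv2, Nat.even_add_one, parity_simps]
      rw [hfj, hfj1]
      rw [Finset.disjoint_right]
      intro x hx hx'
      rw [hEval (i+1) hit] at hx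
      rw [hOval i (by omega), Finset.mem_compl] at hx'
      rw [mem_finIco] at hx
      have hmul : (i+1)*d = i*d + d := by ring
      exact hx' (mem_finIco.mpr (by omega))
  obtain ⟨w, hw⟩ := walk_of_fn (kneser n k) f (2*t) hadj
  have hlastadj : (kneser n k).Adj (f (2*t)) (f 0) := by
    apply kneser_adj_of_disjoint hk
    have hfl : f (2*t) = E t := by
      rw [hf]; simp [show (2*t)/2 = t by omega]
    have hf0 : f 0 = E 0 := by rw [hf]; simp
    rw [hfl, hf0]
    rw [Finset.disjoint_left]
    intro x hx hx'
    rw [hEval t le_rfl, mem_finIco] at hx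
    rw [hEval 0 (Nat.zero_le t), mem_finIco] at hx'
    have hz : 0*d = 0 := by ring
    omega
  exact ⟨f 0, w.concat hlastadj, by rw [SimpleGraph.Walk.length_concat, hw]⟩

end Aux

/-- For `n > 2k`, the odd girth of the Kneser graph `K_{n,k}` equals `2⌈k/(n-2k)⌉ + 1`. -/
theorem stmt_1 (n k : ℕ) (hk : 0 < k) (h : 2 * k < n) :
    oddGirth (kneser n k) = ((2 * ⌈(k : ℚ) / ((n : ℚ) - 2 * k)⌉₊ + 1 : ℕ) : ℕ∞) := by
  set d := n - 2 * k with hd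
  have hd0 : 0 < d := by omega
  have hdq : ((d : ℕ) : ℚ) = (n : ℚ) - 2 * k := by
    rw [hd, Nat.cast_sub (by omega : 2*k ≤ n)]
    push_cast
    ring
  set t := ⌈(k : ℚ) / ((n : ℚ) - 2 * k)⌉₊ with ht
  have hchar : ∀ s : ℕ, t ≤ s ↔ k ≤ s * d := by
    intro s
    rw [ht, Nat.ceil_le, div_le_iff₀ (by rw [← hdq]; exact_mod_cast hd0), ← hdq]
    constructor
    · intro h'; exact_mod_cast h'
    · intro h'; exact_mod_cast h'
  have hkt : k ≤ t * d := (hchar t).mp le_rfl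
  have ht1 : 1 ≤ t := by
    rcases Nat.eq_zero_or_pos t with h0 | h0
    · rw [h0] at hkt; simp at hkt; omega
    · exact h0
  have htd : t * d + k ≤ n := by
    have hnot : ¬ (t ≤ t - 1) := by omega
    rw [hchar] at hnot
    push_neg at hnot
    have hsplit : t * d = (t-1)*d + d := by
      conv_lhs => rw [show t = (t-1)+1 by omega]
      ring
    omega
  apply le_antisymm
  · apply sInf_le
    exact ⟨2*t+1, ⟨⟨t, by ring⟩, kneser_upper n k t hk h hkt htd⟩, rfl⟩
  · apply le_sInf
    rintro x ⟨l, ⟨⟨m, hm⟩, v, w, hw⟩, rfl⟩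
    have hlow := kneser_lower n k h w m (hw.trans hm)
    have htm : t ≤ m := (hchar m).mpr hlow
    exact_mod_cast Nat.cast_le.mpr (by omega : 2*t+1 ≤ l)
end

section
/- Let r ≥ 2 and m odd with m > 2r. The faces of N_r(C_m) that are not faces of N_{r−1}(C_m) are exactly the faces σ containing, for some x ∈ ℤ/mℤ, both x and x + 2r (indices mod m, with σ ⊆ {x, x+1, ..., x+2r}); moreover the sets P_x = {σ ∈ F N_r(C_m) : {x, x+2r} ⊆ σ} for x ∈ ℤ/mℤ partition F N_r(C_m) \ F N_{r−1}(C_m). -/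
open SimpleGraph

lemma mem_nbhd_cyc {m : ℕ} (hm : 1 < m) (r : ℕ) (v w : ZMod m) :
    w ∈ nbhd (cyc m) r v ↔ ∃ i ≤ r, w + (r : ZMod m) = v + ((2*i : ℕ) : ZMod m) := by
  haveI : Fact (1 < m) := ⟨hm⟩
  induction r generalizing w with
  | zero => simp [nbhd]
  | succ r ih =>
    simp only [nbhd, Set.mem_setOf_eq, cyc]
    constructor
    · rintro ⟨u, hu, hne, hadj⟩
      obtain ⟨i, hi, hiw⟩ := (ih u).mp hu
      rcases hadj with h' | h'
      · exact ⟨i+1, by omega, by subst h'; push_cast at hiw ⊢; linear_combination hiw⟩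
      · exact ⟨i, by omega, by subst h'; push_cast at hiw ⊢; linear_combination hiw⟩
    · rintro ⟨i, hi, hw⟩
      rcases Nat.eq_zero_or_eq_succ_pred i with rfl | hij
      · refine ⟨w + 1, (ih _).mpr ⟨0, Nat.zero_le r, ?_⟩, ?_, Or.inr rfl⟩
        · push_cast at hw ⊢; linear_combination hw
        · intro hc
          have : (1 : ZMod m) = 0 := by linear_combination hc
          exact one_ne_zero this
      · obtain ⟨j, rfl⟩ : ∃ j, i = j + 1 := ⟨i - 1, hij⟩
        refine ⟨w - 1, (ih _).mpr ⟨j, by omega, ?_⟩, ?_, Or.inl (by ring)⟩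
        · push_cast at hw ⊢; linear_combination hw
        · intro hc
          have : (1 : ZMod m) = 0 := by linear_combination -hc
          exact one_ne_zero this

lemma mem_nComplex_iff {m : ℕ} (hm : 1 < m) (s : ℕ) (σ : Finset (ZMod m)) :
    σ ∈ nComplex (cyc m) s ↔ ∃ z : ZMod m, ∀ y ∈ σ, ∃ i ≤ s, y = z + ((2*i : ℕ) : ZMod m) := by
  constructor
  · rintro ⟨v, hv⟩
    refine ⟨v - (s : ZMod m), fun y hy => ?_⟩
    obtain ⟨i, hi, he⟩ := (mem_nbhd_cyc hm s v y).mp (hv (Finset.mem_coe.mpr hy))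
    exact ⟨i, hi, by linear_combination he⟩
  · rintro ⟨z, hz⟩
    refine ⟨z + (s : ZMod m), fun y hy => ?_⟩
    obtain ⟨i, hi, he⟩ := hz y (Finset.mem_coe.mp hy)
    exact (mem_nbhd_cyc hm s _ y).mpr ⟨i, hi, by rw [he]; ring⟩

lemma key {m r s : ℕ} (hm : Odd m) (h : 2*r < m) (hs : s ≤ r) {z x : ZMod m}
    {a b : ℕ} (ha : a ≤ s) (hb : b ≤ s)
    (hxa : x = z + ((2*a : ℕ) : ZMod m))
    (hxb : x + ((2*r : ℕ) : ZMod m) = z + ((2*b : ℕ) : ZMod m)) :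
    a = 0 ∧ b = r := by
  subst hxa
  have hc : ((2*(a+r) : ℕ) : ZMod m) = ((2*b : ℕ) : ZMod m) := by
    push_cast at hxb ⊢; linear_combination hxb
  have hmod : 2*(a+r) ≡ 2*b [MOD m] := (ZMod.natCast_eq_natCast_iff _ _ _).mp hc
  have hcop : Nat.gcd m 2 = 1 := (Nat.coprime_two_left.mpr hm).symm
  have h2 : a + r ≡ b [MOD m] := hmod.cancel_left_of_coprime hcop
  have h3 : (a + r) % m = b % m := h2
  rw [Nat.mod_eq_of_lt (by omega), Nat.mod_eq_of_lt (by omega)] at h3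
  omega

lemma endpoints_exist {m r : ℕ} (hm : Odd m) (h : 2*r < m) (hr : 2 ≤ r)
    (σ : Finset (ZMod m)) (h1 : σ ∈ nComplex (cyc m) r) (h2 : σ ∉ nComplex (cyc m) (r-1)) :
    ∃ z : ZMod m, z ∈ σ ∧ z + ((2*r : ℕ) : ZMod m) ∈ σ ∧
      ∀ y ∈ σ, ∃ i ≤ r, y = z + ((2*i : ℕ) : ZMod m) := by
  have hm1 : 1 < m := by omega
  obtain ⟨z, hz⟩ := (mem_nComplex_iff hm1 r σ).mp h1
  by_cases hz0 : z ∈ σ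
  · by_cases hzr : z + ((2*r : ℕ) : ZMod m) ∈ σ
    · exact ⟨z, hz0, hzr, hz⟩
    · exfalso; apply h2
      apply (mem_nComplex_iff hm1 (r-1) σ).mpr
      refine ⟨z, fun y hy => ?_⟩
      obtain ⟨i, hi, he⟩ := hz y hy
      have hir : i ≠ r := by rintro rfl; exact hzr (he ▸ hy)
      exact ⟨i, by omega, he⟩
  · exfalso; apply h2
    apply (mem_nComplex_iff hm1 (r-1) σ).mpr
    refine ⟨z + 2, fun y hy => ?_⟩
    obtain ⟨i, hi, he⟩ := hz y hy
    have hi0 : i ≠ 0 := by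
      rintro rfl
      apply hz0
      have : y = z := by rw [he]; push_cast; ring
      exact this ▸ hy
    obtain ⟨j, rfl⟩ : ∃ j, i = j + 1 := ⟨i - 1, by omega⟩
    refine ⟨j, by omega, ?_⟩
    rw [he]; push_cast; ring

/-- For `r ≥ 2` and odd `m > 2r`: the faces of `N_r(C_m)` not in `N_{r-1}(C_m)` are exactly
the faces containing `x` and `x + 2r` for some `x`, with all vertices within `{x, …, x+2r}`;
moreover the posets `P_x` partition this difference (the `x` is unique). -/
theorem stmt_13 (r m : ℕ) (hr : 2 ≤ r) (hm : Odd m) (h : 2 * r < m) :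
    (∀ σ : Finset (ZMod m),
      (σ ∈ nComplex (cyc m) r ∧ σ ∉ nComplex (cyc m) (r - 1)) ↔
        (σ ∈ nComplex (cyc m) r ∧ ∃ x : ZMod m, x ∈ σ ∧ x + ((2 * r : ℕ) : ZMod m) ∈ σ ∧
          ∀ y ∈ σ, ∃ j : ℕ, j ≤ 2 * r ∧ y = x + (j : ZMod m))) ∧
    (∀ σ : Finset (ZMod m), σ ∈ nComplex (cyc m) r → σ ∉ nComplex (cyc m) (r - 1) →
      ∃! x : ZMod m, x ∈ σ ∧ x + ((2 * r : ℕ) : ZMod m) ∈ σ) := by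
  have hm1 : 1 < m := by omega
  constructor
  · intro σ
    constructor
    · rintro ⟨h1, h2⟩
      obtain ⟨z, hz0, hzr, hz⟩ := endpoints_exist hm h hr σ h1 h2
      refine ⟨h1, z, hz0, hzr, fun y hy => ?_⟩
      obtain ⟨i, hi, he⟩ := hz y hy
      exact ⟨2*i, by omega, he⟩
    · rintro ⟨h1, x, hx, hxr, -⟩
      refine ⟨h1, fun hc => ?_⟩
      obtain ⟨z, hz⟩ := (mem_nComplex_iff hm1 (r-1) σ).mp hc
      obtain ⟨a, ha, hae⟩ := hz x hx
      obtain ⟨b, hb, hbe⟩ := hz _ hxr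
      obtain ⟨-, hbr⟩ := key hm h (Nat.sub_le r 1) ha hb hae hbe
      omega
  · intro σ h1 h2
    obtain ⟨z, hz0, hzr, hz⟩ := endpoints_exist hm h hr σ h1 h2
    refine ⟨z, ⟨hz0, hzr⟩, ?_⟩
    rintro x ⟨hx, hxr⟩
    obtain ⟨a, ha, hae⟩ := hz x hx
    obtain ⟨b, hb, hbe⟩ := hz _ hxr
    obtain ⟨rfl, -⟩ := key hm h (le_refl r) ha hb hae hbe
    rw [hae]; push_cast; ring
end

section
/- Let n, k be positive integers and r a nonnegative integer with n > 2k and k − 1 = r(n−2k). If G is a graph with fewer than C(n,k) vertices whose odd girth is at least that of K_{n,k} (in particular equal to it, 2r+3), then there is no graph homomorphism from K_{n,k} to G. -/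
open SimpleGraph

lemma claimR {n k : ℕ} (h : 2 * k < n) {A B : {A : Finset (Fin n) // A.card = k}}
    (w : (kneser n k).Walk A B) :
    ∀ i, 2 * i ≤ w.length → k ≤ (A.1 ∩ (w.getVert (2 * i)).1).card + i * (n - 2 * k) := by
  intro i
  induction i with
  | zero =>
    intro _
    simp [Walk.getVert_zero, Finset.inter_self, A.2]
  | succ i ih =>
    intro hi
    have h1 : 2 * i < w.length := by omega
    have h2 : 2 * i + 1 < w.length := by omega
    have ihh := ih (by omega)
    set U := w.getVert (2 * i) with hU
    set V := w.getVert (2 * i + 1) with hV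
    set D := w.getVert (2 * (i + 1)) with hD
    have a1 : (kneser n k).Adj U V := w.adj_getVert_succ h1
    have a2 : (kneser n k).Adj V D := by
      have h3 : 2 * (i + 1) = (2 * i + 1) + 1 := by omega
      rw [hD, h3]
      exact w.adj_getVert_succ h2
    have d1 : Disjoint (A.1 ∩ U.1) V.1 := Finset.disjoint_of_subset_left Finset.inter_subset_right a1.2
    have d2 : Disjoint D.1 V.1 := a2.2.symm
    have dun : Disjoint ((A.1 ∩ U.1) ∪ D.1) V.1 := Finset.disjoint_union_left.mpr ⟨d1, d2⟩
    have hcu : ((A.1 ∩ U.1) ∪ D.1).card + V.1.card ≤ n := by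
      rw [← Finset.card_union_of_disjoint dun]
      calc (((A.1 ∩ U.1) ∪ D.1) ∪ V.1).card ≤ (Finset.univ : Finset (Fin n)).card :=
            Finset.card_le_card (Finset.subset_univ _)
        _ = n := by simp
    have hci : (A.1 ∩ U.1).card + D.1.card ≤ ((A.1 ∩ U.1) ∪ D.1).card + ((A.1 ∩ U.1) ∩ D.1).card :=
      le_of_eq (Finset.card_union_add_card_inter _ _).symm
    have hsub : (A.1 ∩ U.1) ∩ D.1 ⊆ A.1 ∩ D.1 :=
      Finset.inter_subset_inter Finset.inter_subset_left (le_refl _)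
    have hle : ((A.1 ∩ U.1) ∩ D.1).card ≤ (A.1 ∩ D.1).card := Finset.card_le_card hsub
    have hVc : V.1.card = k := V.2
    have hDc : D.1.card = k := D.2
    have hmul : (i + 1) * (n - 2 * k) = i * (n - 2 * k) + (n - 2 * k) := by ring
    omega

lemma odd_closed_ge {n k r : ℕ} (h : 2 * k < n) (hk : k = r * (n - 2 * k) + 1)
    {A : {A : Finset (Fin n) // A.card = k}} (w : (kneser n k).Walk A A)
    (hodd : Odd w.length) : 2 * r + 3 ≤ w.length := by
  obtain ⟨j, hj⟩ := hodd
  have hlen : w.length = 2 * j + 1 := hj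
  have hc := claimR h w.reverse j (by rw [Walk.length_reverse]; omega)
  rw [Walk.getVert_reverse] at hc
  rw [hlen] at hc
  have h1 : 2 * j + 1 - 2 * j = 1 := by omega
  rw [h1] at hc
  have hadj : (kneser n k).Adj A (w.getVert 1) := by
    have := w.adj_getVert_succ (i := 0) (by omega)
    simpa using this
  have hz : (A.1 ∩ (w.getVert 1).1).card = 0 := by
    rw [Finset.card_eq_zero, ← Finset.disjoint_iff_inter_eq_empty]
    exact hadj.2
  rw [hz] at hc
  have hrj : r < j := by
    by_contra hcon
    push_neg at hcon
    have := Nat.mul_le_mul_right (n - 2 * k) hcon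
    omega
  omega

lemma exists_odd_walk {n k : ℕ} (h : 2 * k < n) (hk0 : 0 < k) :
    ∀ m (A B : {A : Finset (Fin n) // A.card = k}), A ≠ B →
      (A.1 ∩ B.1).card ≤ m * (n - 2 * k) →
      ∃ w : (kneser n k).Walk A B, Odd w.length ∧ w.length ≤ 2 * m + 1 := by
  intro m
  induction m with
  | zero =>
    intro A B hne hc
    have hd : Disjoint A.1 B.1 := by
      rw [Finset.disjoint_iff_inter_eq_empty, ← Finset.card_eq_zero]; omega
    exact ⟨Walk.cons (kneser_adj_of_disjoint hk0 hd) Walk.nil, by simp [Nat.odd_iff], by simp⟩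
  | succ m ih =>
    intro A B hne hc
    set t := n - 2 * k with ht
    set c := (A.1 ∩ B.1).card with hcdef
    by_cases hc0 : c = 0
    · have hd : Disjoint A.1 B.1 := by
        rw [Finset.disjoint_iff_inter_eq_empty, ← Finset.card_eq_zero]; omega
      exact ⟨Walk.cons (kneser_adj_of_disjoint hk0 hd) Walk.nil, by simp [Nat.odd_iff], by simp⟩
    · -- c > 0
      have hck : c < k := by
        by_contra hcon
        push_neg at hcon
        have hsA : A.1 ∩ B.1 ⊆ A.1 := Finset.inter_subset_left
        have hsB : A.1 ∩ B.1 ⊆ B.1 := Finset.inter_subset_right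
        have hA : A.1 ∩ B.1 = A.1 := Finset.eq_of_subset_of_card_le hsA (by omega)
        have hB : A.1 ∩ B.1 = B.1 := Finset.eq_of_subset_of_card_le hsB (by omega)
        exact hne (Subtype.ext (hA ▸ hB))
      set μ := min c t with hμ
      have hμpos : 0 < μ := by
        have : 0 < t := by omega
        omega
      obtain ⟨X, hXs, hXc⟩ := Finset.exists_subset_card_eq (s := A.1 ∩ B.1) (n := μ) (by omega)
      have hunion : (A.1 ∪ B.1).card + c = 2 * k := by
        have := Finset.card_union_add_card_inter A.1 B.1
        rw [A.2, B.2] at this; omega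
      have hcompl : μ ≤ ((A.1 ∪ B.1)ᶜ).card := by
        rw [Finset.card_compl]
        simp only [Fintype.card_fin]
        omega
      obtain ⟨Y, hYs, hYc⟩ := Finset.exists_subset_card_eq hcompl
      have hYA : Disjoint Y A.1 := Finset.disjoint_left.mpr fun a haY haA =>
        (Finset.mem_compl.mp (hYs haY)) (Finset.mem_union_left _ haA)
      have hYB : Disjoint Y B.1 := Finset.disjoint_left.mpr fun a haY haB =>
        (Finset.mem_compl.mp (hYs haY)) (Finset.mem_union_right _ haB)
      set D : Finset (Fin n) := (A.1 \ X) ∪ Y with hDdef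
      have hXA : X ⊆ A.1 := hXs.trans Finset.inter_subset_left
      have hDcard : D.card = k := by
        have hd : Disjoint (A.1 \ X) Y := (Finset.disjoint_of_subset_right Finset.sdiff_subset hYA).symm
        rw [hDdef, Finset.card_union_of_disjoint hd, Finset.card_sdiff_of_subset hXA, hXc, hYc, A.2]
        omega
      have hDB : (D ∩ B.1).card = c - μ := by
        have : D ∩ B.1 = (A.1 ∩ B.1) \ X := by
          rw [hDdef, Finset.union_inter_distrib_right]
          rw [Finset.disjoint_iff_inter_eq_empty.mp hYB]
          rw [Finset.union_empty]
          ext a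
          simp only [Finset.mem_inter, Finset.mem_sdiff]
          constructor
          · rintro ⟨⟨h1, h2⟩, h3⟩; exact ⟨⟨h1, h3⟩, h2⟩
          · rintro ⟨⟨h1, h3⟩, h2⟩; exact ⟨⟨h1, h2⟩, h3⟩
        rw [this, Finset.card_sdiff_of_subset (hXs)]
        omega
      -- C
      have hAY : (A.1 ∪ Y).card = k + μ := by
        rw [Finset.card_union_of_disjoint hYA.symm, A.2, hYc]
      have hCavail : k ≤ ((A.1 ∪ Y)ᶜ).card := by
        rw [Finset.card_compl]
        simp only [Fintype.card_fin]
        omega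
      obtain ⟨C, hCs, hCc⟩ := Finset.exists_subset_card_eq hCavail
      have hCA : Disjoint C A.1 := by
        refine Finset.disjoint_left.mpr ?_
        intro a ha hA
        have := hCs ha
        simp only [Finset.mem_compl, Finset.mem_union] at this
        exact this (Or.inl hA)
      have hCD : Disjoint C D := by
        refine Finset.disjoint_left.mpr ?_
        intro a ha hD
        have hcs := hCs ha
        simp only [Finset.mem_compl, Finset.mem_union] at hcs
        rw [hDdef] at hD
        simp only [Finset.mem_union, Finset.mem_sdiff] at hD
        rcases hD with ⟨h1, _⟩ | h2
        · exact hcs (Or.inl h1)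
        · exact hcs (Or.inr h2)
      set Cv : {A : Finset (Fin n) // A.card = k} := ⟨C, hCc⟩ with hCv
      set Dv : {A : Finset (Fin n) // A.card = k} := ⟨D, hDcard⟩ with hDv
      have hDvB : Dv ≠ B := by
        intro e
        have : (D ∩ B.1).card = k := by
          rw [show D = B.1 from congrArg Subtype.val e, Finset.inter_self, B.2]
        omega
      have hDBle : (Dv.1 ∩ B.1).card ≤ m * t := by
        have hmul : (m + 1) * t = m * t + t := by ring
        simp only [hDv]
        omega
      obtain ⟨w', hw'odd, hw'len⟩ := ih Dv B hDvB hDBle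
      have adj1 : (kneser n k).Adj A Cv := kneser_adj_of_disjoint hk0 hCA.symm
      have adj2 : (kneser n k).Adj Cv Dv := kneser_adj_of_disjoint hk0 hCD
      refine ⟨Walk.cons adj1 (Walk.cons adj2 w'), ?_, ?_⟩
      · simp only [Walk.length_cons]
        rcases hw'odd with ⟨p, hp⟩
        exact ⟨p + 1, by omega⟩
      · simp only [Walk.length_cons]; omega

/-- Main Theorem 1: for `n > 2k`, `k - 1 = r(n-2k)`, if `G` has fewer than `C(n,k)` vertices
and odd girth at least that of `K_{n,k}`, then there is no graph homomorphism
`K_{n,k} → G`. -/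
theorem stmt_14 {W : Type*} [Fintype W] (G : SimpleGraph W) (n k r : ℕ)
    (hn : 0 < n) (hk : 0 < k) (h : 2 * k < n) (hr : k - 1 = r * (n - 2 * k))
    (hcard : Fintype.card W < Nat.choose n k)
    (hg : oddGirth (kneser n k) ≤ oddGirth G) :
    IsEmpty (kneser n k →g G) := by
  constructor
  intro f
  have hkr : k = r * (n - 2 * k) + 1 := by omega
  -- f is not injective
  have hcV : Fintype.card {A : Finset (Fin n) // A.card = k} = Nat.choose n k := by
    rw [Fintype.card_finset_len, Fintype.card_fin]
  have hninj : ¬ Function.Injective f := by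
    intro hinj
    have := Fintype.card_le_of_injective f hinj
    omega
  rw [Function.not_injective_iff] at hninj
  obtain ⟨A, B, hfAB, hne⟩ := hninj
  -- odd walk from A to B of length ≤ 2r+1
  have hcAB : (A.1 ∩ B.1).card ≤ r * (n - 2 * k) := by
    have hck : (A.1 ∩ B.1).card < k := by
      by_contra hcon
      push_neg at hcon
      have hA : A.1 ∩ B.1 = A.1 := Finset.eq_of_subset_of_card_le Finset.inter_subset_left (by omega)
      have hB : A.1 ∩ B.1 = B.1 := Finset.eq_of_subset_of_card_le Finset.inter_subset_right (by omega)
      exact hne (Subtype.ext (hA ▸ hB))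
    omega
  obtain ⟨w, hwodd, hwlen⟩ := exists_odd_walk h hk r A B hne hcAB
  -- map to G
  let w' : G.Walk (f A) (f A) := (Walk.map f w).copy rfl hfAB.symm
  have hw'len : w'.length = w.length := by
    simp [w', Walk.length_copy, Walk.length_map]
  have hG_le : oddGirth G ≤ (w.length : ℕ∞) := by
    apply sInf_le
    exact ⟨w.length, ⟨hw'len ▸ hwodd, f A, w', hw'len⟩, rfl⟩
  have hK_ge : (↑(2 * r + 3) : ℕ∞) ≤ oddGirth (kneser n k) := by
    apply le_sInf
    rintro x ⟨l, ⟨hodd, v, wv, rfl⟩, rfl⟩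
    exact_mod_cast odd_closed_ge h hkr wv hodd
  have : (↑(2 * r + 3) : ℕ∞) ≤ (w.length : ℕ∞) := le_trans hK_ge (le_trans hg hG_le)
  have : 2 * r + 3 ≤ w.length := by exact_mod_cast this
  omega
end

section
/- Let G be a graph and r a positive integer. For any edge loop (v₀,...,v_n) in N_r(G) based at v (so each {v_{i−1}, v_i} is a face of N_r(G)), there exists a closed walk γ of length 2rn in G with γ(2ri) = v_i for all i = 0,...,n. -/
open SimpleGraph

/-- `L` is (the tail of) a closed walk in `G` based at `v`: the full walk is `v :: L`. -/
def IsLoop {V : Type*} (G : SimpleGraph V) (v : V) (L : List V) : Prop :=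
  List.Chain G.Adj v L ∧ (v :: L).getLast? = some v

/-- `L` is (the tail of) an edge loop at `v` in the simplicial complex `K`: consecutive
vertices of `v :: L` span a face of `K`, and the walk starts and ends at `v`. -/
def IsELoop {V : Type*} [DecidableEq V] (K : Set (Finset V)) (v : V) (L : List V) : Prop :=
  List.Chain (fun a b => ({a, b} : Finset V) ∈ K) v L ∧ (v :: L).getLast? = some v


lemma mem_nbhd_iff {V : Type*} (G : SimpleGraph V) :
    ∀ (r : ℕ) (v a : V), a ∈ nbhd G r v ↔ ∃ p : G.Walk a v, p.length = r := by
  intro r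
  induction r with
  | zero =>
    intro v a
    constructor
    · intro h
      rw [show a = v from h]
      exact ⟨SimpleGraph.Walk.nil, rfl⟩
    · rintro ⟨p, hp⟩
      exact (SimpleGraph.Walk.eq_of_length_eq_zero hp)
  | succ r ih =>
    intro v a
    constructor
    · rintro ⟨w, hw, hadj⟩
      obtain ⟨p, hp⟩ := (ih v w).mp hw
      exact ⟨SimpleGraph.Walk.cons hadj.symm p, by simp [hp]⟩
    · rintro ⟨p, hp⟩
      cases p with
      | nil => simp at hp
      | cons h q =>
        simp only [SimpleGraph.Walk.length_cons, Nat.succ_inj] at hp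
        exact ⟨_, (ih v _).mpr ⟨q, hp⟩, h.symm⟩

lemma seg_exists {V : Type*} [DecidableEq V] (G : SimpleGraph V) (r : ℕ) {a b : V}
    (h : ({a, b} : Finset V) ∈ nComplex G r) :
    ∃ s : List V, s.length = 2 * r ∧ List.Chain G.Adj a s ∧
      (a :: s)[2 * r]? = some b := by
  obtain ⟨w, hw⟩ := h
  have ha : a ∈ nbhd G r w := hw (by simp)
  have hb : b ∈ nbhd G r w := hw (by simp)
  obtain ⟨p, hp⟩ := (mem_nbhd_iff G r w a).mp ha
  obtain ⟨q, hq⟩ := (mem_nbhd_iff G r w b).mp hb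
  set P : G.Walk a b := p.append q.reverse with hP
  have hlen : P.length = 2 * r := by
    simp [hP, SimpleGraph.Walk.length_append, hp, hq]; ring
  refine ⟨P.support.tail, ?_, ?_, ?_⟩
  · have h1 := P.length_support
    have h2 : P.support.tail.length = P.support.length - 1 := List.length_tail
    omega
  · have hc := P.isChain_adj_support
    rw [P.support_eq_cons] at hc
    exact hc
  · have hsupp : (a :: P.support.tail) = P.support := (P.support_eq_cons).symm
    rw [hsupp]
    have hne : P.support ≠ [] := SimpleGraph.Walk.support_ne_nil P
    have hlast : P.support.getLast? = some b := by
      rw [List.getLast?_eq_getLast hne, P.getLast_support]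
    rw [show 2 * r = P.support.length - 1 by
      rw [P.length_support]; omega, ← List.getLast?_eq_getElem?]
    exact hlast

lemma lift_chain {V : Type*} [DecidableEq V] (G : SimpleGraph V) (r : ℕ) (hr : 0 < r) :
    ∀ (l : List V) (a : V),
      List.Chain (fun x y => ({x, y} : Finset V) ∈ nComplex G r) a l →
      ∃ w : List V, List.Chain G.Adj a w ∧ w.length = 2 * r * l.length ∧
        ∀ i : ℕ, (a :: w)[2 * r * i]? = (a :: l)[i]? := by
  intro l
  induction l with
  | nil =>
    intro a _
    refine ⟨[], List.Chain.nil, by simp, ?_⟩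
    intro i
    cases i with
    | zero => simp
    | succ j =>
      have hpos : 0 < 2 * r * (j + 1) := Nat.mul_pos (by omega) (Nat.succ_pos j)
      rw [List.getElem?_eq_none (by simp; omega), List.getElem?_eq_none (by simp)]
  | cons b t ih =>
    intro a hchain
    unfold List.Chain at hchain
    rw [List.chain_cons] at hchain
    obtain ⟨hab, ht⟩ := hchain
    obtain ⟨s, hslen, hschain, hsget⟩ := seg_exists G r hab
    obtain ⟨w', hw'chain, hw'len, hw'get⟩ := ih b ht
    have haslen : (a :: s).length = 2 * r + 1 := by simp [hslen]
    have key : ∀ k : ℕ, ((a :: s) ++ w')[2 * r + k]? = (b :: w')[k]? := by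
      intro k
      cases k with
      | zero =>
        rw [Nat.add_zero,
          List.getElem?_append_left (by omega : 2 * r < (a :: s).length)]
        simpa using hsget
      | succ k =>
        rw [show 2 * r + (k + 1) = (a :: s).length + k by omega,
          List.getElem?_append_right (by omega)]
        simp
    refine ⟨s ++ w', ?_, ?_, ?_⟩
    · show List.IsChain G.Adj ((a :: s) ++ w')
      have hc1 : List.IsChain G.Adj (a :: s) := hschain
      have hc2 : List.IsChain G.Adj (b :: w') := hw'chain
      obtain ⟨hhead, hc3⟩ := List.isChain_cons.mp hc2
      refine hc1.append hc3 ?_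
      intro x hx y hy
      rw [List.getLast?_eq_getElem?, haslen, Nat.add_sub_cancel, hsget,
        Option.mem_some_iff] at hx
      rw [← hx]
      exact hhead y hy
    · simp [hslen, hw'len, List.length_append, Nat.mul_succ]; ring
    · intro i
      cases i with
      | zero => simp
      | succ j =>
        calc (a :: (s ++ w'))[2 * r * (j + 1)]?
            = ((a :: s) ++ w')[2 * r + 2 * r * j]? := by
              rw [List.cons_append]; congr 1; ring
          _ = (b :: w')[2 * r * j]? := key _
          _ = (b :: t)[j]? := hw'get j
          _ = (a :: b :: t)[j + 1]? := by simp

/-- For every edge loop `(v₀, …, v_n)` in `N_r(G)` based at `v` there is a closed walk `γ`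
of length `2rn` in `G` with `γ(2ri) = v_i` for all `i`. -/
theorem stmt_17 {V : Type*} [DecidableEq V] (G : SimpleGraph V) (r : ℕ) (hr : 0 < r)
    (v : V) (l : List V) (hl : IsELoop (nComplex G r) v l) :
    ∃ w : List V, IsLoop G v w ∧ w.length = 2 * r * l.length ∧
      ∀ i : ℕ, (v :: w)[2 * r * i]? = (v :: l)[i]? := by
  obtain ⟨hchain, hlast⟩ := hl
  obtain ⟨w, hwchain, hwlen, hwget⟩ := lift_chain G r hr l v hchain
  refine ⟨w, ⟨hwchain, ?_⟩, hwlen, hwget⟩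
  have h1 : (v :: w).getLast? = (v :: w)[w.length]? := by
    rw [List.getLast?_eq_getElem?]
    simp
  rw [h1, hwlen, hwget l.length,
    show l.length = (v :: l).length - 1 by simp, ← List.getLast?_eq_getElem?]
  exact hlast
end
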